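/- For each pair (D,L) with D ∈ Der(𝔤) and L a d-derivation of 𝔤, the map 𝔇_{(D,L)} : C(𝔤) → C(𝔤) defined by 𝔇_{(D,L)}(D₁,g) = ([D,D₁], D(g) + L(ad(g)) + L(D₁)) is a derivation of the full graph C(𝔤). -/

import Mathlib

variable {k : Type*} [Field k] {g : Type*} [LieRing g] [LieAlgebra k g]

/-- A `d`-derivation of `g`: a linear map `L : Der(g) → g` with
`L ⁅D₁, D₂⁆ = D₁ (L D₂) - D₂ (L D₁)`. -/
def IsDDerivation (L : LieDerivation k g g →ₗ[k] g) : Prop :=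
  ∀ D₁ D₂ : LieDerivation k g g, L ⁅D₁, D₂⁆ = D₁ (L D₂) - D₂ (L D₁)

/-- The inner `d`-derivation `L_x : D ↦ -D x`. -/
def innerDDer (x : g) : LieDerivation k g g →ₗ[k] g where
  toFun D := -(D x)
  map_add' := by intros; simp [add_comm]
  map_smul' := by intros; simp

/-- The bracket of `d`-derivations: `[L₁,L₂](D) = L₁(ad(L₂ D)) - L₂(ad(L₁ D))`. -/
def dBracket (L₁ L₂ : LieDerivation k g g →ₗ[k] g) : LieDerivation k g g →ₗ[k] g :=
  L₁ ∘ₗ ((LieDerivation.ad k g : g →ₗ⁅k⁆ LieDerivation k g g) : g →ₗ[k] LieDerivation k g g) ∘ₗ L₂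
    - L₂ ∘ₗ ((LieDerivation.ad k g : g →ₗ⁅k⁆ LieDerivation k g g) : g →ₗ[k] LieDerivation k g g) ∘ₗ L₁

/-- The action of `Der(g)` on `d`-derivations: `D(L) = D ∘ L - L ∘ ad(D)`. -/
def derAct (D : LieDerivation k g g) (L : LieDerivation k g g →ₗ[k] g) :
    LieDerivation k g g →ₗ[k] g :=
  (D : g →ₗ[k] g) ∘ₗ L - L ∘ₗ ((LieAlgebra.ad k (LieDerivation k g g)) D)

/-- The bracket of the full graph `C(g) = Der(g) ⋉ g`. -/
def fgBracket (p q : LieDerivation k g g × g) : LieDerivation k g g × g :=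
  (⁅p.1, q.1⁆, p.1 q.2 - q.1 p.2 + ⁅p.2, q.2⁆)

/-- A derivation of the full graph: a linear endomorphism satisfying Leibniz. -/
def IsFGDerivation (T : (LieDerivation k g g × g) →ₗ[k] (LieDerivation k g g × g)) : Prop :=
  ∀ p q, T (fgBracket p q) = fgBracket (T p) q + fgBracket p (T q)

/-- The derivation `𝔇_{(D,L)}` of the full graph. -/
def fgDer (D : LieDerivation k g g) (L : LieDerivation k g g →ₗ[k] g)
    (p : LieDerivation k g g × g) : LieDerivation k g g × g :=
  (⁅D, p.1⁆, D p.2 + L (LieDerivation.ad k g p.2) + L p.1)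

lemma ad_D_apply (D : LieDerivation k g g) (x : g) :
    LieDerivation.ad k g (D x) = ⁅D, LieDerivation.ad k g x⁆ := by
  rw [LieDerivation.ad_apply_lieDerivation, ← LieDerivation.lie_ad, ← lie_skew, neg_neg]

theorem stmt10 (D : LieDerivation k g g) (L : LieDerivation k g g →ₗ[k] g)
    (hL : IsDDerivation L) :
    IsLinearMap k (fgDer D L) ∧
    ∀ p q : LieDerivation k g g × g,
      fgDer D L (fgBracket p q) =
        fgBracket (fgDer D L p) q + fgBracket p (fgDer D L q) := by
  constructor
  · constructor
    · intro p q
      simp only [fgDer, Prod.fst_add, Prod.snd_add, lie_add, map_add, Prod.mk_add_mk]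
      ext <;> simp <;> abel
    · intro c p
      simp only [fgDer, Prod.smul_fst, Prod.smul_snd, lie_smul, map_smul, Prod.smul_mk]
      ext <;> simp
  · rintro ⟨D₁, g₁⟩ ⟨D₂, g₂⟩
    simp only [fgDer, fgBracket, Prod.mk_add_mk, Prod.mk.injEq]
    constructor
    · rw [leibniz_lie]
    · have hL' : ∀ A B : LieDerivation k g g, L ⁅A, B⁆ = A (L B) - B (L A) := hL
      simp only [map_add, map_sub, ad_D_apply, hL',
        LieHom.map_lie, LieDerivation.apply_lie_eq_add, LieDerivation.lie_apply,
        LieDerivation.ad_apply_apply, add_lie, lie_add]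
      rw [← lie_skew (L D₁) g₂, ← lie_skew (L (LieDerivation.ad k g g₁)) g₂]
      abel
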